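/- Let μ₁ and μ₂ be Borel probability measures on [0,1]^d with cumulative distribution functions H₁ and H₂, and suppose |H₁(u) − H₂(u)| ≤ δ for all u ∈ [0,1]^d, where δ ≥ 0. Then for every weight vector w = (w₁,…,w_d) ∈ (0,1]^d with w₁ + ⋯ + w_d = 1, | ∫_{[0,1]^d} ν_w(u) dμ₁(u) − ∫_{[0,1]^d} ν_w(u) dμ₂(u) | ≤ 2δ. -/

import Mathlib

open MeasureTheory Finset

/-- The multivariate `w`-madogram integrand
`ν_w(u) = max_i uᵢ^(1/wᵢ) − (1/d) Σᵢ uᵢ^(1/wᵢ)`. -/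
noncomputable def nuW (d : ℕ) (hd : 0 < d) (w u : Fin d → ℝ) : ℝ :=
  (Finset.univ.sup' (Finset.univ_nonempty_iff.mpr (Fin.pos_iff_nonempty.mp hd))
      fun i => u i ^ (1 / w i)) -
    (1 / (d : ℝ)) * ∑ i, u i ^ (1 / w i)

/-- Cumulative distribution function of a measure on `[0,1]^d ⊆ ℝ^d`. -/
noncomputable def cdf {d : ℕ} (μ : Measure (Fin d → ℝ)) (u : Fin d → ℝ) : ℝ :=
  (μ {v | ∀ i, v i ≤ u i}).toReal

section Aux
variable {α : Type*} [MeasurableSpace α]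

lemma layercake01 (μ : Measure α) [IsProbabilityMeasure μ] (f : α → ℝ)
    (hm : Measurable f) (h0 : ∀ x, 0 ≤ f x) (h1 : ∀ x, f x ≤ 1) :
    ∫ x, f x ∂μ = ∫ t in Set.Ioc (0:ℝ) 1, (1 - (μ {a | f a ≤ t}).toReal) := by
  have hint : Integrable f μ := by
    refine (integrable_const (1:ℝ)).mono' hm.aestronglyMeasurable ?_
    exact Filter.Eventually.of_forall fun x => by
      rw [Real.norm_eq_abs, abs_of_nonneg (h0 x)]; exact h1 x
  rw [hint.integral_eq_integral_meas_lt (Filter.Eventually.of_forall h0)]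
  rw [setIntegral_eq_of_subset_of_ae_diff_eq_zero nullMeasurableSet_Ioi
      Set.Ioc_subset_Ioi_self ?_]
  · refine setIntegral_congr_fun measurableSet_Ioc fun t ht => ?_
    have hs : {a | t < f a} = {a | f a ≤ t}ᶜ := by ext a; simp
    have hmeas : MeasurableSet {a | f a ≤ t} := hm measurableSet_Iic
    rw [hs, measureReal_def, measure_compl hmeas (measure_ne_top μ _), measure_univ,
      ENNReal.toReal_sub_of_le prob_le_one ENNReal.one_ne_top, ENNReal.toReal_one]
  · refine Filter.Eventually.of_forall fun t ht => ?_
    have h1t : (1:ℝ) < t := by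
      simp only [Set.mem_diff, Set.mem_Ioi, Set.mem_Ioc, not_and, not_le] at ht
      exact ht.2 ht.1
    have : {a | t < f a} = ∅ := by
      ext a; simp only [Set.mem_setOf_eq, Set.mem_empty_iff_false, iff_false, not_lt]
      exact (h1 a).trans h1t.le
    simp [this]

lemma mono_int (μ : Measure α) [IsProbabilityMeasure μ] (f : α → ℝ) :
    IntegrableOn (fun t => (μ {a | f a ≤ t}).toReal) (Set.Ioc (0:ℝ) 1) := by
  have hmono : Monotone fun t => (μ {a | f a ≤ t}).toReal := fun s t hst =>
    ENNReal.toReal_mono (measure_ne_top μ _) (measure_mono fun a ha => le_trans ha hst)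
  exact ((hmono.monotoneOn _).integrableOn_isCompact isCompact_Icc).mono_set
    Set.Ioc_subset_Icc_self

lemma key_bound (μ₁ μ₂ : Measure α) [IsProbabilityMeasure μ₁] [IsProbabilityMeasure μ₂]
    (f : α → ℝ) (hm : Measurable f) (h0 : ∀ x, 0 ≤ f x) (h1 : ∀ x, f x ≤ 1)
    (δ : ℝ)
    (hcl : ∀ t ∈ Set.Ioc (0:ℝ) 1,
      |(μ₁ {a | f a ≤ t}).toReal - (μ₂ {a | f a ≤ t}).toReal| ≤ δ) :
    |(∫ x, f x ∂μ₁) - ∫ x, f x ∂μ₂| ≤ δ := by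
  rw [layercake01 μ₁ f hm h0 h1, layercake01 μ₂ f hm h0 h1]
  have hconst : IntegrableOn (fun _ : ℝ => (1:ℝ)) (Set.Ioc (0:ℝ) 1) :=
    (integrableOn_const_iff).mpr (Or.inr measure_Ioc_lt_top)
  have hi₁ : IntegrableOn (fun t => 1 - (μ₁ {a | f a ≤ t}).toReal) (Set.Ioc (0:ℝ) 1) :=
    hconst.sub (mono_int μ₁ f)
  have hi₂ : IntegrableOn (fun t => 1 - (μ₂ {a | f a ≤ t}).toReal) (Set.Ioc (0:ℝ) 1) :=
    hconst.sub (mono_int μ₂ f)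
  rw [← integral_sub hi₁ hi₂]
  calc |∫ t in Set.Ioc (0:ℝ) 1,
        ((1 - (μ₁ {a | f a ≤ t}).toReal) - (1 - (μ₂ {a | f a ≤ t}).toReal))|
      ≤ δ * (volume (Set.Ioc (0:ℝ) 1)).toReal := by
        rw [← Real.norm_eq_abs]
        refine norm_setIntegral_le_of_norm_le_const measure_Ioc_lt_top
          fun t ht => ?_
        rw [Real.norm_eq_abs]
        have heq : (1 - (μ₁ {a | f a ≤ t}).toReal) - (1 - (μ₂ {a | f a ≤ t}).toReal)
            = -((μ₁ {a | f a ≤ t}).toReal - (μ₂ {a | f a ≤ t}).toReal) := by ring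
        rw [heq, abs_neg]; exact hcl t ht
    _ = δ := by simp

end Aux

theorem madogram_cdf_stability (d : ℕ) (hd : 2 ≤ d)
    (μ₁ μ₂ : Measure (Fin d → ℝ)) [IsProbabilityMeasure μ₁] [IsProbabilityMeasure μ₂]
    (hμ₁ : μ₁ (Set.univ.pi fun _ : Fin d => Set.Icc (0:ℝ) 1)ᶜ = 0)
    (hμ₂ : μ₂ (Set.univ.pi fun _ : Fin d => Set.Icc (0:ℝ) 1)ᶜ = 0)
    (δ : ℝ) (hδ : 0 ≤ δ)
    (hclose : ∀ u : Fin d → ℝ, (∀ i, u i ∈ Set.Icc (0:ℝ) 1) →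
      |cdf μ₁ u - cdf μ₂ u| ≤ δ)
    (w : Fin d → ℝ) (hw : ∀ i, 0 < w i ∧ w i ≤ 1) (hwsum : ∑ i, w i = 1) :
    |(∫ u, nuW d (by omega) w u ∂μ₁) - ∫ u, nuW d (by omega) w u ∂μ₂| ≤ 2 * δ := by
  have hd0 : 0 < d := by omega
  set cube : Set (Fin d → ℝ) := Set.univ.pi fun _ : Fin d => Set.Icc (0:ℝ) 1 with hcube
  set φ : Fin d → (Fin d → ℝ) → ℝ := fun i u => (min (max (u i) 0) 1) ^ (1 / w i) with hφ
  have hφm : ∀ i, Measurable (φ i) := fun i => by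
    rw [hφ]; fun_prop
  have hφ0 : ∀ i u, 0 ≤ φ i u := fun i u =>
    Real.rpow_nonneg (le_min (le_max_right _ _) zero_le_one) _
  have hφ1 : ∀ i u, φ i u ≤ 1 := fun i u =>
    Real.rpow_le_one (le_min (le_max_right _ _) zero_le_one) (min_le_right _ _)
      (one_div_nonneg.mpr (hw i).1.le)
  have hne : (univ : Finset (Fin d)).Nonempty :=
    Finset.univ_nonempty_iff.mpr (Fin.pos_iff_nonempty.mp hd0)
  set F : (Fin d → ℝ) → ℝ := fun u => univ.sup' hne fun i => φ i u with hF
  have hFm : Measurable F := by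
    have h := Finset.measurable_sup' hne (fun i (_ : i ∈ univ) => hφm i)
    have he : F = univ.sup' hne φ := funext fun u => (Finset.sup'_apply hne φ u).symm
    rw [he]; exact h
  have hF0 : ∀ u, 0 ≤ F u := fun u =>
    le_trans (hφ0 ⟨0, hd0⟩ u) (Finset.le_sup' (fun i => φ i u) (mem_univ (⟨0, hd0⟩ : Fin d)))
  have hF1 : ∀ u, F u ≤ 1 := fun u => Finset.sup'_le _ _ fun i _ => hφ1 i u
  have hmem : ∀ (μ : Measure (Fin d → ℝ)), μ cubeᶜ = 0 → ∀ᵐ u ∂μ, u ∈ cube := by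
    intro μ h
    rw [ae_iff]
    exact h
  have hclamp : ∀ u ∈ cube, ∀ i, min (max (u i) 0) 1 = u i := by
    intro u hu i
    have h := Set.mem_univ_pi.mp hu i
    rw [max_eq_left h.1, min_eq_left h.2]
  -- decomposition of the integral
  have hnu : ∀ (μ : Measure (Fin d → ℝ)) [IsProbabilityMeasure μ], μ cubeᶜ = 0 →
      ∫ u, nuW d hd0 w u ∂μ = (∫ u, F u ∂μ) - (1/(d:ℝ)) * ∑ i, ∫ u, φ i u ∂μ := by
    intro μ _ hμ
    have hInt : ∀ g : (Fin d → ℝ) → ℝ, Measurable g → (∀ x, 0 ≤ g x) → (∀ x, g x ≤ 1) →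
        Integrable g μ := fun g hg h0 h1 =>
      (integrable_const (1:ℝ)).mono' hg.aestronglyMeasurable
        (Filter.Eventually.of_forall fun x => by
          rw [Real.norm_eq_abs, abs_of_nonneg (h0 x)]; exact h1 x)
    have hIφ : ∀ i, Integrable (φ i) μ := fun i => hInt _ (hφm i) (hφ0 i) (hφ1 i)
    have hIF : Integrable F μ := hInt _ hFm hF0 hF1
    have hcongr : ∫ u, nuW d hd0 w u ∂μ = ∫ u, (F u - (1/(d:ℝ)) * ∑ i, φ i u) ∂μ := by
      refine integral_congr_ae ?_
      filter_upwards [hmem μ hμ] with u hu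
      simp only [nuW, hF, hφ, hclamp u hu]
    rw [hcongr, integral_sub hIF (((integrable_finset_sum univ fun i _ => hIφ i)).const_mul _),
      integral_const_mul, integral_finset_sum _ fun i _ => hIφ i]
  -- cdf identification for F
  have hsetF : ∀ (μ : Measure (Fin d → ℝ)), μ cubeᶜ = 0 → ∀ t : ℝ, t ∈ Set.Ioc (0:ℝ) 1 →
      (μ {a | F a ≤ t}).toReal = cdf μ (fun i => t ^ w i) := by
    intro μ hμ t ht
    unfold cdf
    congr 1
    refine measure_congr (Filter.eventuallyEq_set.mpr ?_)
    filter_upwards [hmem μ hμ] with u hu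
    simp only [Set.mem_setOf_eq, hF, Finset.sup'_le_iff, mem_univ, true_implies]
    refine forall_congr' fun i => ?_
    simp only [hφ, hclamp u hu i]
    rw [one_div, Real.rpow_inv_le_iff_of_pos (Set.mem_univ_pi.mp hu i).1 ht.1.le (hw i).1]
  -- cdf identification for φ i
  have hsetφ : ∀ (μ : Measure (Fin d → ℝ)), μ cubeᶜ = 0 → ∀ i, ∀ t : ℝ,
      t ∈ Set.Ioc (0:ℝ) 1 →
      (μ {a | φ i a ≤ t}).toReal = cdf μ (fun j => if j = i then t ^ w i else 1) := by
    intro μ hμ i t ht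
    unfold cdf
    congr 1
    refine measure_congr (Filter.eventuallyEq_set.mpr ?_)
    filter_upwards [hmem μ hμ] with u hu
    simp only [Set.mem_setOf_eq, hφ, hclamp u hu i]
    rw [one_div, Real.rpow_inv_le_iff_of_pos (Set.mem_univ_pi.mp hu i).1 ht.1.le (hw i).1]
    constructor
    · intro h j
      by_cases hj : j = i
      · subst hj; simpa using h
      · simp only [hj, if_false]
        exact (Set.mem_univ_pi.mp hu j).2
    · intro h
      have := h i
      simpa using this
  have hIcc : ∀ t : ℝ, t ∈ Set.Ioc (0:ℝ) 1 → ∀ i, t ^ w i ∈ Set.Icc (0:ℝ) 1 := by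
    intro t ht i
    exact ⟨Real.rpow_nonneg ht.1.le _, Real.rpow_le_one ht.1.le ht.2 (hw i).1.le⟩
  -- bound for F
  have hFdiff : |(∫ u, F u ∂μ₁) - ∫ u, F u ∂μ₂| ≤ δ := by
    refine key_bound μ₁ μ₂ F hFm hF0 hF1 δ fun t ht => ?_
    rw [hsetF μ₁ hμ₁ t ht, hsetF μ₂ hμ₂ t ht]
    exact hclose _ (hIcc t ht)
  -- bound for φ i
  have hφdiff : ∀ i, |(∫ u, φ i u ∂μ₁) - ∫ u, φ i u ∂μ₂| ≤ δ := by
    intro i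
    refine key_bound μ₁ μ₂ (φ i) (hφm i) (hφ0 i) (hφ1 i) δ fun t ht => ?_
    rw [hsetφ μ₁ hμ₁ i t ht, hsetφ μ₂ hμ₂ i t ht]
    refine hclose _ fun j => ?_
    by_cases hj : j = i
    · simp only [hj, if_pos rfl]; exact hIcc t ht i
    · simp only [hj, if_false]; exact ⟨zero_le_one, le_refl 1⟩
  -- put it together
  rw [hnu μ₁ hμ₁, hnu μ₂ hμ₂]
  set A₁ := ∫ u, F u ∂μ₁
  set A₂ := ∫ u, F u ∂μ₂
  set S₁ := ∑ i, ∫ u, φ i u ∂μ₁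
  set S₂ := ∑ i, ∫ u, φ i u ∂μ₂
  have hc0 : (0:ℝ) ≤ 1/(d:ℝ) := by positivity
  have hS : |S₁ - S₂| ≤ (d:ℝ) * δ := by
    rw [← Finset.sum_sub_distrib]
    refine (Finset.abs_sum_le_sum_abs _ _).trans ?_
    calc ∑ i : Fin d, |(∫ u, φ i u ∂μ₁) - ∫ u, φ i u ∂μ₂| ≤ ∑ _i : Fin d, δ :=
          Finset.sum_le_sum fun i _ => hφdiff i
      _ = (d:ℝ) * δ := by simp [mul_comm]
  have habs : |(A₁ - 1/(d:ℝ) * S₁) - (A₂ - 1/(d:ℝ) * S₂)|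
      ≤ |A₁ - A₂| + 1/(d:ℝ) * |S₁ - S₂| := by
    have heq : (A₁ - 1/(d:ℝ) * S₁) - (A₂ - 1/(d:ℝ) * S₂)
        = (A₁ - A₂) - 1/(d:ℝ) * (S₁ - S₂) := by ring
    rw [heq]
    refine (abs_sub _ _).trans ?_
    rw [abs_mul, abs_of_nonneg hc0]
  have hcd : 1/(d:ℝ) * ((d:ℝ) * δ) = δ := by
    have : (d:ℝ) ≠ 0 := by positivity
    field_simp
  have h1 : 1/(d:ℝ) * |S₁ - S₂| ≤ 1/(d:ℝ) * ((d:ℝ) * δ) :=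
    mul_le_mul_of_nonneg_left hS hc0
  linarith
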